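/- If a quantum state ρ on a bipartite system satisfies ρ ≤ 2^λ σ for some separable state σ, and Λ is an LOCC channel (more generally, a channel mapping separable states to separable states), then Λ(ρ) ≤ 2^λ σ' for some separable state σ'. Hence the max-relative entropy of entanglement E_max is monotone non-increasing under separability-preserving channels. -/

import Mathlib

open Matrix
open scoped ComplexOrder BigOperators Classical Kronecker

noncomputable section

/-- A bipartite state is separable if it is a convex combination of product states. -/
def IsSeparableState {α β : Type*} [Fintype α] [Fintype β]
    (ρ : Matrix (α × β) (α × β) ℂ) : Prop :=
  ∃ (m : ℕ) (p : Fin m → ℝ) (x : Fin m → Matrix α α ℂ) (y : Fin m → Matrix β β ℂ),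
    (∀ i, 0 ≤ p i) ∧ (∑ i, p i = 1) ∧
    (∀ i, (x i).PosSemidef ∧ (x i).trace = 1) ∧
    (∀ i, (y i).PosSemidef ∧ (y i).trace = 1) ∧
    ρ = ∑ i, p i • (x i ⊗ₖ y i)

/-- The Choi matrix of a map between matrix spaces. -/
def choiMatrix {ι κ : Type*} [Fintype ι] [DecidableEq ι] [Fintype κ]
    (F : Matrix ι ι ℂ → Matrix κ κ ℂ) : Matrix (ι × κ) (ι × κ) ℂ :=
  fun x y => F (Matrix.single x.1 y.1 1) x.2 y.2

/-- A map is completely positive iff its Choi matrix is positive semidefinite. -/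
def IsCompletelyPositive {ι κ : Type*} [Fintype ι] [DecidableEq ι] [Fintype κ]
    (F : Matrix ι ι ℂ → Matrix κ κ ℂ) : Prop :=
  (choiMatrix F).PosSemidef

/-- Feasible set for the max-relative entropy of entanglement:
`{λ : ρ ≤ 2^λ σ, σ separable state}`. -/
def emaxSet {α β : Type*} [Fintype α] [Fintype β]
    (ρ : Matrix (α × β) (α × β) ℂ) : Set ℝ :=
  {l : ℝ | ∃ σ : Matrix (α × β) (α × β) ℂ, IsSeparableState σ ∧ σ.PosSemidef ∧ σ.trace = 1 ∧
      (((2 : ℝ) ^ l) • σ - ρ).PosSemidef}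

/-- Max-relative entropy of entanglement `E_max(ρ) = inf{λ : ρ ≤ 2^λ σ, σ separable}`. -/
def Emax {α β : Type*} [Fintype α] [Fintype β]
    (ρ : Matrix (α × β) (α × β) ℂ) : EReal :=
  if (emaxSet ρ).Nonempty then ((sInf (emaxSet ρ) : ℝ) : EReal) else ⊤

section Aux
variable {ι κ : Type*} [Fintype ι] [DecidableEq ι] [Fintype κ]

lemma cp_entry (F : Matrix ι ι ℂ → Matrix κ κ ℂ)
    (hadd : ∀ X Y, F (X + Y) = F X + F Y) (hsmul : ∀ (c : ℂ) X, F (c • X) = c • F X)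
    (Y : Matrix ι ι ℂ) (k l : κ) :
    F Y k l = ∑ i, ∑ j, Y i j * choiMatrix F (i, k) (j, l) := by
  let L : Matrix ι ι ℂ →ₗ[ℂ] Matrix κ κ ℂ :=
    { toFun := F, map_add' := hadd, map_smul' := hsmul }
  have h1 : F Y = ∑ i, ∑ j, Y i j • F (Matrix.single i j 1) := by
    show L Y = _
    conv_lhs => rw [Matrix.matrix_eq_sum_single Y]
    rw [map_sum]
    refine Finset.sum_congr rfl fun i _ => ?_
    rw [map_sum]
    refine Finset.sum_congr rfl fun j _ => ?_
    rw [show Matrix.single i j (Y i j) = Y i j • Matrix.single i j 1 by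
      rw [Matrix.smul_single, smul_eq_mul, mul_one]]
    exact L.map_smul _ _
  rw [h1]
  simp [Matrix.sum_apply, choiMatrix]

lemma sum_swap4 {a b c d γ : Type*} [Fintype a] [Fintype b] [Fintype c] [Fintype d]
    [AddCommMonoid γ] (f : a → b → c → d → γ) :
    ∑ k : b, ∑ l : d, ∑ i : a, ∑ j : c, f i k j l
      = ∑ i : a, ∑ k : b, ∑ j : c, ∑ l : d, f i k j l := by
  calc ∑ k : b, ∑ l : d, ∑ i : a, ∑ j : c, f i k j l
      = ∑ k : b, ∑ i : a, ∑ l : d, ∑ j : c, f i k j l := by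
        refine Finset.sum_congr rfl fun k _ => ?_; rw [Finset.sum_comm]
    _ = ∑ i : a, ∑ k : b, ∑ l : d, ∑ j : c, f i k j l := Finset.sum_comm
    _ = ∑ i : a, ∑ k : b, ∑ j : c, ∑ l : d, f i k j l := by
        refine Finset.sum_congr rfl fun i _ => ?_
        refine Finset.sum_congr rfl fun k _ => ?_
        rw [Finset.sum_comm]

lemma cp_posSemidef (F : Matrix ι ι ℂ → Matrix κ κ ℂ)
    (hadd : ∀ X Y, F (X + Y) = F X + F Y) (hsmul : ∀ (c : ℂ) X, F (c • X) = c • F X)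
    (hCP : (choiMatrix F).PosSemidef) {X : Matrix ι ι ℂ} (hX : X.PosSemidef) :
    (F X).PosSemidef := by
  open scoped MatrixOrder Matrix.Norms.L2Operator in
  obtain ⟨B, hB⟩ := CStarAlgebra.nonneg_iff_eq_star_mul_self.mp hX.nonneg
  rw [star_eq_conjTranspose] at hB
  subst hB
  have hYh : (Bᴴ * B).IsHermitian := (Matrix.posSemidef_conjTranspose_mul_self B).1
  refine Matrix.PosSemidef.of_dotProduct_mulVec_nonneg ?_ ?_
  · ext k l
    rw [Matrix.conjTranspose_apply, cp_entry F hadd hsmul _ l k, cp_entry F hadd hsmul _ k l]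
    simp_rw [star_sum, star_mul', hYh.apply, hCP.1.apply]
    rw [Finset.sum_comm]
  · intro v
    classical
    let L : Matrix ι ι ℂ →ₗ[ℂ] Matrix κ κ ℂ :=
      { toFun := F, map_add' := hadd, map_smul' := hsmul }
    let M : ι → Matrix ι ι ℂ := fun r => Matrix.of fun i j => star (B r i) * B r j
    have hY : Bᴴ * B = ∑ r, M r := by
      ext i j
      simp [M, Matrix.mul_apply, Matrix.sum_apply, Matrix.conjTranspose_apply]
    have hFsum : F (Bᴴ * B) = ∑ r, F (M r) := by
      show L (Bᴴ * B) = _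
      rw [hY, map_sum]; rfl
    have hsplit : star v ⬝ᵥ (F (Bᴴ * B)) *ᵥ v = ∑ r, star v ⬝ᵥ (F (M r)) *ᵥ v := by
      rw [hFsum]
      simp only [dotProduct, Matrix.mulVec, Matrix.sum_apply, Finset.sum_mul, Finset.mul_sum]
      rw [show (∑ k, ∑ j, ∑ r : ι, star v k * (F (M r) k j * v j))
            = ∑ k, ∑ r : ι, ∑ j, star v k * (F (M r) k j * v j) by
          exact Finset.sum_congr rfl fun k _ => Finset.sum_comm]
      exact Finset.sum_comm
    rw [hsplit]
    refine Finset.sum_nonneg fun r _ => ?_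
    have key : star v ⬝ᵥ (F (M r)) *ᵥ v
        = star (fun p : ι × κ => B r p.1 * v p.2) ⬝ᵥ
          (choiMatrix F) *ᵥ (fun p : ι × κ => B r p.1 * v p.2) := by
      simp only [dotProduct, Matrix.mulVec, Fintype.sum_prod_type, Pi.star_apply,
        cp_entry F hadd hsmul, M, Matrix.of_apply, Finset.sum_mul, Finset.mul_sum]
      rw [sum_swap4 (fun i k j l => star (v k) * (star (B r i) * B r j *
        choiMatrix F (i, k) (j, l) * v l))]
      refine Finset.sum_congr rfl fun i _ => ?_
      refine Finset.sum_congr rfl fun k _ => ?_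
      refine Finset.sum_congr rfl fun j _ => ?_
      refine Finset.sum_congr rfl fun l _ => ?_
      simp [star_mul']; ring
    rw [key]
    exact hCP.dotProduct_mulVec_nonneg _

end Aux

lemma psd_trace_nonneg' {n : Type*} [Fintype n] {M : Matrix n n ℂ} (h : M.PosSemidef) :
    0 ≤ M.trace := by
  classical
  rw [Matrix.trace]
  refine Finset.sum_nonneg fun i _ => ?_
  have h2 := h.dotProduct_mulVec_nonneg (Pi.single i 1)
  simpa [Matrix.mulVec_single, dotProduct, Pi.single_apply, apply_ite,
    Finset.sum_ite_eq', Matrix.diag] using h2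

lemma real_smul_matrix_eq {n m : Type*} (r : ℝ) (M : Matrix n m ℂ) :
    r • M = (r : ℂ) • M := by
  ext i j
  simp [Complex.real_smul]


/-- If `ρ ≤ 2^λ σ` for a separable state `σ` and `Λ` is a separability-preserving
channel, then `Λ(ρ) ≤ 2^λ σ'` for some separable state `σ'`; hence `E_max` is
monotone non-increasing under separability-preserving channels. -/
theorem emax_monotone_sep_preserving
    {α β α' β' : Type*} [Fintype α] [Fintype β] [DecidableEq α] [DecidableEq β]
    [Fintype α'] [Fintype β']
    (Λ : Matrix (α × β) (α × β) ℂ → Matrix (α' × β') (α' × β') ℂ)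
    (hadd : ∀ X Y, Λ (X + Y) = Λ X + Λ Y)
    (hsmul : ∀ (c : ℂ) X, Λ (c • X) = c • Λ X)
    (hCP : IsCompletelyPositive Λ)
    (hTP : ∀ X, (Λ X).trace = X.trace)
    (hSP : ∀ τ, IsSeparableState τ → IsSeparableState (Λ τ))
    (ρ σ : Matrix (α × β) (α × β) ℂ)
    (hρ : ρ.PosSemidef) (hρt : ρ.trace = 1)
    (hσsep : IsSeparableState σ) (hσ : σ.PosSemidef) (hσt : σ.trace = 1)
    (l : ℝ) (hle : (((2 : ℝ) ^ l) • σ - ρ).PosSemidef) :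
    (∃ σ' : Matrix (α' × β') (α' × β') ℂ, IsSeparableState σ' ∧ σ'.PosSemidef ∧
        σ'.trace = 1 ∧ (((2 : ℝ) ^ l) • σ' - Λ ρ).PosSemidef) ∧
    Emax (Λ ρ) ≤ Emax ρ := by
  have hneg : ∀ X, Λ (-X) = -Λ X := fun X => by
    have := hsmul (-1) X
    simpa using this
  have hsub : ∀ X Y, Λ (X - Y) = Λ X - Λ Y := fun X Y => by
    rw [sub_eq_add_neg, hadd, hneg, sub_eq_add_neg]
  have hrsmul : ∀ (r : ℝ) X, Λ (r • X) = r • Λ X := fun r X => by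
    rw [real_smul_matrix_eq, hsmul, ← real_smul_matrix_eq]
  have step : ∀ l' : ℝ, l' ∈ emaxSet ρ → l' ∈ emaxSet (Λ ρ) := by
    rintro l' ⟨σ₀, hsep, hpsd, htr, hdiff⟩
    refine ⟨Λ σ₀, hSP σ₀ hsep, cp_posSemidef Λ hadd hsmul hCP hpsd,
      by rw [hTP]; exact htr, ?_⟩
    have heq : ((2 : ℝ) ^ l') • Λ σ₀ - Λ ρ = Λ (((2 : ℝ) ^ l') • σ₀ - ρ) := by
      rw [hsub, hrsmul]
    rw [heq]
    exact cp_posSemidef Λ hadd hsmul hCP hdiff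
  have hmemρ : l ∈ emaxSet ρ := ⟨σ, hσsep, hσ, hσt, hle⟩
  have hne : (emaxSet ρ).Nonempty := ⟨l, hmemρ⟩
  have hne' : (emaxSet (Λ ρ)).Nonempty := ⟨l, step l hmemρ⟩
  have hbdd : BddBelow (emaxSet (Λ ρ)) := by
    refine ⟨0, fun l' hl' => ?_⟩
    obtain ⟨σ', _, _, htr', hdiff'⟩ := hl'
    have htr0 : (0 : ℂ) ≤ (((2 : ℝ) ^ l') • σ' - Λ ρ).trace := psd_trace_nonneg' hdiff'
    have : (((2 : ℝ) ^ l') • σ' - Λ ρ).trace = ((((2 : ℝ) ^ l' - 1 : ℝ)) : ℂ) := by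
      rw [Matrix.trace_sub, Matrix.trace_smul, htr', hTP, hρt]
      push_cast
      simp [Complex.real_smul]
    rw [this] at htr0
    have h1 : (1 : ℝ) ≤ (2 : ℝ) ^ l' := by
      have := (Complex.zero_le_real).mp htr0
      linarith
    have h2 : (2 : ℝ) ^ (0 : ℝ) ≤ (2 : ℝ) ^ l' := by
      rwa [Real.rpow_zero]
    exact (Real.rpow_le_rpow_left_iff (by norm_num : (1:ℝ) < 2)).mp h2
  refine ⟨step l hmemρ, ?_⟩
  rw [Emax, Emax, if_pos hne, if_pos hne']
  exact EReal.coe_le_coe_iff.mpr (csInf_le_csInf hbdd hne step)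


end
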